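/- Let L > π, c > 1 + π/(L-π), and let φ_c be the periodic travelling wave of the rBO equation with Fourier coefficients φ̂_c(n) = (2πc/L)e^{-η(c)|n|}, η(c) = tanh⁻¹(cπ/((c-1)L)). Then the function χ = -dφ_c/dc satisfies (χ, φ_c + Hφ_c')_{L²} = -L (d/dc) Σ_{n∈ℤ}(1+|n|)|φ̂_c(n)|² < 0. -/

import Mathlib

/-!
Negativity of the pairing (χ, φ_c + Hφ_c') for the rBO periodic wave
(part of Lemma 7.1(a)): with φ̂_c(n) = (2πc/L) e^{−η(c)|n|},
η(c) = tanh⁻¹(cπ/((c−1)L)), and χ = −dφ_c/dc, one has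
  (χ, φ_c + Hφ_c')_{L²} = −L (d/dc) Σ_{n∈ℤ} (1+|n|) |φ̂_c(n)|² < 0,
i.e. the function F(c) = Σ_{n∈ℤ} (1+|n|) |φ̂_c(n)|² is differentiable with
strictly positive derivative.
-/

/-- The inverse hyperbolic tangent, `tanh⁻¹ x = (1/2) log((1+x)/(1-x))`. -/
noncomputable def arctanh (x : ℝ) : ℝ := (1 / 2) * Real.log ((1 + x) / (1 - x))

/-- `η(c) = tanh⁻¹(cπ/((c−1)L))`. -/
noncomputable def ηc (L c : ℝ) : ℝ := arctanh (c * Real.pi / ((c - 1) * L))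

/-- `F(c) = Σ_{n∈ℤ} (1+|n|) |φ̂_c(n)|²` with `φ̂_c(n) = (2πc/L) e^{−η(c)|n|}`. -/
noncomputable def Fpair (L : ℝ) (c : ℝ) : ℝ :=
  ∑' n : ℤ, (1 + |(n : ℝ)|) *
    ((2 * Real.pi * c / L) * Real.exp (-(ηc L c) * |(n : ℝ)|)) ^ 2

open Real in
lemma tsum_closed (A η : ℝ) (hη : 0 < η) :
    (∑' n : ℤ, (1 + |(n : ℝ)|) * (A * Real.exp (-η * |(n : ℝ)|)) ^ 2)
      = A ^ 2 * (1 + 2 * Real.exp (-(2 * η)) - Real.exp (-(2 * η)) ^ 2)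
          / (1 - Real.exp (-(2 * η))) ^ 2 := by
  set Q := Real.exp (-(2 * η)) with hQdef
  have hQ0 : 0 < Q := Real.exp_pos _
  have hQ1 : Q < 1 := by
    rw [hQdef, Real.exp_lt_one_iff]; linarith
  have hne : (1 : ℝ) - Q ≠ 0 := by linarith
  -- rewrite summand
  have hsummand : ∀ n : ℤ, (1 + |(n : ℝ)|) * (A * Real.exp (-η * |(n : ℝ)|)) ^ 2
      = A ^ 2 * ((1 + (n.natAbs : ℝ)) * Q ^ n.natAbs) := by
    intro n
    have habs : |(n : ℝ)| = (n.natAbs : ℝ) := by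
      rw [Nat.cast_natAbs]; push_cast; ring
    rw [habs, hQdef, mul_pow, ← Real.exp_nat_mul, ← Real.exp_nat_mul]
    rw [show ((n.natAbs : ℕ) : ℝ) * -(2 * η) = ((2:ℕ):ℝ) * (-η * (n.natAbs : ℝ)) by
      push_cast; ring]
    ring
  have hs0 : Summable (fun k : ℕ => (1 + (k : ℝ)) * Q ^ k) := by
    have h1 : Summable (fun k : ℕ => Q ^ k) := summable_geometric_of_lt_one hQ0.le hQ1
    have h2 : Summable (fun k : ℕ => (k : ℝ) * Q ^ k) := by
      simpa using summable_pow_mul_geometric_of_norm_lt_one 1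
        (r := Q) (by rwa [Real.norm_eq_abs, abs_of_pos hQ0])
    simpa [add_mul] using h1.add h2
  have hsA : Summable (fun k : ℕ => A ^ 2 * ((1 + (k : ℝ)) * Q ^ k)) := hs0.mul_left _
  have hT : (∑' k : ℕ, (1 + (k : ℝ)) * Q ^ k) = 1 / (1 - Q) ^ 2 := by
    have h1 : Summable (fun k : ℕ => Q ^ k) := summable_geometric_of_lt_one hQ0.le hQ1
    have h2 : Summable (fun k : ℕ => (k : ℝ) * Q ^ k) := by
      simpa using summable_pow_mul_geometric_of_norm_lt_one 1
        (r := Q) (by rwa [Real.norm_eq_abs, abs_of_pos hQ0])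
    have := h1.tsum_add h2
    have e1 : (∑' k : ℕ, Q ^ k) = (1 - Q)⁻¹ := tsum_geometric_of_lt_one hQ0.le hQ1
    have e2 : (∑' k : ℕ, (k : ℝ) * Q ^ k) = Q / (1 - Q) ^ 2 :=
      tsum_coe_mul_geometric_of_norm_lt_one (by rwa [Real.norm_eq_abs, abs_of_pos hQ0])
    calc (∑' k : ℕ, (1 + (k : ℝ)) * Q ^ k) = ∑' k : ℕ, (Q ^ k + (k : ℝ) * Q ^ k) := by
          congr 1; ext k; ring
      _ = (1 - Q)⁻¹ + Q / (1 - Q) ^ 2 := by rw [this, e1, e2]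
      _ = 1 / (1 - Q) ^ 2 := by field_simp; ring
  -- split ℤ sum
  have hshift : Summable (fun k : ℕ => A ^ 2 * ((1 + ((k : ℝ) + 1)) * Q ^ (k + 1))) := by
    have := (summable_nat_add_iff 1).mpr hsA
    simpa [Nat.cast_add] using this
  have hpos : ∀ k : ℕ, (((k : ℤ) + 1)).natAbs = k + 1 := by intro k; omega
  have hneg : ∀ k : ℕ, ((-((k : ℤ) + 1))).natAbs = k + 1 := by intro k; omega
  calc (∑' n : ℤ, (1 + |(n : ℝ)|) * (A * Real.exp (-η * |(n : ℝ)|)) ^ 2)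
      = ∑' n : ℤ, A ^ 2 * ((1 + ((n.natAbs : ℕ) : ℝ)) * Q ^ n.natAbs) := by
        congr 1; ext n; exact hsummand n
    _ = (∑' k : ℕ, A ^ 2 * ((1 + (((k + 1 : ℤ).natAbs : ℕ) : ℝ)) * Q ^ (k + 1 : ℤ).natAbs))
        + A ^ 2 * ((1 + (((0 : ℤ).natAbs : ℕ) : ℝ)) * Q ^ (0 : ℤ).natAbs)
        + ∑' k : ℕ, A ^ 2 * ((1 + (((-(k + 1) : ℤ).natAbs : ℕ) : ℝ)) * Q ^ (-(k + 1) : ℤ).natAbs) := by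
        apply tsum_of_add_one_of_neg_add_one
        · simpa only [hpos, Nat.cast_add, Nat.cast_one] using hshift
        · simpa only [hneg, Nat.cast_add, Nat.cast_one] using hshift
    _ = A ^ 2 * (1 + 2 * Q - Q ^ 2) / (1 - Q) ^ 2 := by
        simp only [hpos, hneg, Int.natAbs_zero, pow_zero, Nat.cast_zero]
        have hS1 : (∑' k : ℕ, A ^ 2 * ((1 + ((k + 1 : ℕ) : ℝ)) * Q ^ (k + 1)))
            = (∑' k : ℕ, A ^ 2 * ((1 + (k : ℝ)) * Q ^ k)) - A ^ 2 * ((1 + (0 : ℝ)) * Q ^ 0) := by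
          have := hsA.tsum_eq_zero_add
          push_cast
          push_cast at this
          linarith [this]
        push_cast at hS1 ⊢
        rw [hS1, tsum_mul_left, hT]
        field_simp
        ring

open Real in
lemma x_facts (L c : ℝ) (hL : Real.pi < L) (hc : 1 + Real.pi / (L - Real.pi) < c) :
    0 < c * Real.pi / ((c - 1) * L) ∧ c * Real.pi / ((c - 1) * L) < 1 ∧ 1 < c := by
  have hπ : 0 < Real.pi := Real.pi_pos
  have hL0 : 0 < L := lt_trans hπ hL
  have hLπ : 0 < L - Real.pi := by linarith
  have hfrac : 0 < Real.pi / (L - Real.pi) := div_pos hπ hLπ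
  have hc1 : 1 < c := by linarith
  have hden : 0 < (c - 1) * L := mul_pos (by linarith) hL0
  refine ⟨div_pos (mul_pos (by linarith) hπ) hden, ?_, hc1⟩
  rw [div_lt_one hden]
  have key : Real.pi / (L - Real.pi) * (L - Real.pi) = Real.pi :=
    div_mul_cancel₀ _ (ne_of_gt hLπ)
  nlinarith [mul_lt_mul_of_pos_right hc hLπ]

open Real in
lemma eta_pos (L c : ℝ) (hL : Real.pi < L) (hc : 1 + Real.pi / (L - Real.pi) < c) :
    0 < ηc L c := by
  obtain ⟨hx0, hx1, _⟩ := x_facts L c hL hc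
  set x := c * Real.pi / ((c - 1) * L)
  have : (1 : ℝ) < (1 + x) / (1 - x) := by
    rw [lt_div_iff₀ (by linarith)]; linarith
  exact mul_pos (by norm_num) (Real.log_pos this)

open Real in
noncomputable def Fclosed (L c : ℝ) : ℝ :=
  (2 * Real.pi * c / L) ^ 2 * (1 + 2 * Real.exp (-(2 * ηc L c)) - Real.exp (-(2 * ηc L c)) ^ 2)
    / (1 - Real.exp (-(2 * ηc L c))) ^ 2

open Real in
lemma fpair_eq (L c : ℝ) (hL : Real.pi < L) (hc : 1 + Real.pi / (L - Real.pi) < c) :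
    Fpair L c = Fclosed L c := by
  rw [Fpair, Fclosed]
  rw [tsum_closed (2 * Real.pi * c / L) (ηc L c) (eta_pos L c hL hc)]


/-- **The pairing `(−dφ_c/dc, φ_c + Hφ_c') = −L dF/dc` is strictly negative.** -/
theorem pairing_negative (L c : ℝ) (hL : Real.pi < L)
    (hc : 1 + Real.pi / (L - Real.pi) < c) :
    DifferentiableAt ℝ (Fpair L) c ∧ -L * deriv (Fpair L) c < 0 := by
  have hπ : 0 < Real.pi := Real.pi_pos
  have hL0 : 0 < L := lt_trans hπ hL
  obtain ⟨hx0, hx1, hc1⟩ := x_facts L c hL hc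
  set x := c * Real.pi / ((c - 1) * L) with hxdef
  have hopen : Set.Ioi (1 + Real.pi / (L - Real.pi)) ∈ nhds c := isOpen_Ioi.mem_nhds hc
  have heqF : Fpair L =ᶠ[nhds c] Fclosed L :=
    Filter.eventuallyEq_of_mem hopen (fun c' hc' => fpair_eq L c' hL hc')
  -- derivative of x(c)
  have hdne : (c - 1) * L ≠ 0 := ne_of_gt (mul_pos (by linarith) hL0)
  set x' : ℝ := -(Real.pi * L) / (((c - 1) * L) ^ 2) with hx'def
  have hx : HasDerivAt (fun c' => c' * Real.pi / ((c' - 1) * L)) x' c := by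
    have h := ((hasDerivAt_id c).mul_const Real.pi).div
      (((hasDerivAt_id c).sub_const (1:ℝ)).mul_const L) hdne
    refine h.congr_deriv ?_
    simp only [id_eq]
    rw [hx'def]; ring
  have hx'neg : x' < 0 := by
    rw [hx'def]
    apply div_neg_of_neg_of_pos (by nlinarith) (by positivity)
  -- derivative of η
  have hne1 : (1 : ℝ) + x ≠ 0 := by linarith
  have hne2 : (1 : ℝ) - x ≠ 0 := by linarith
  have hηeq : (ηc L) =ᶠ[nhds c] (fun c' => (1/2) *
      (Real.log (1 + c' * Real.pi / ((c' - 1) * L))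
        - Real.log (1 - c' * Real.pi / ((c' - 1) * L)))) := by
    filter_upwards [hopen] with c' hc'
    obtain ⟨h0, h1, _⟩ := x_facts L c' hL hc'
    rw [ηc, arctanh, Real.log_div (by linarith) (by linarith)]
  have hη : HasDerivAt (ηc L) (x' / (1 - x ^ 2)) c := by
    have h1 : HasDerivAt (fun c' => Real.log (1 + c' * Real.pi / ((c' - 1) * L)))
        ((0 + x') / (1 + x)) c := ((hasDerivAt_const c (1:ℝ)).add hx).log (by show 1 + c * Real.pi / ((c - 1) * L) ≠ 0; rw [← hxdef]; exact hne1)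
    have h2 : HasDerivAt (fun c' => Real.log (1 - c' * Real.pi / ((c' - 1) * L)))
        ((0 - x') / (1 - x)) c := ((hasDerivAt_const c (1:ℝ)).sub hx).log (by show 1 - c * Real.pi / ((c - 1) * L) ≠ 0; rw [← hxdef]; exact hne2)
    have h3 := (h1.sub h2).const_mul (1/2 : ℝ)
    have h4 := h3.congr_of_eventuallyEq hηeq
    refine h4.congr_deriv ?_
    have hx2 : (1:ℝ) - x ^ 2 ≠ 0 := by nlinarith
    field_simp
    ring
  have hη' : x' / (1 - x ^ 2) < 0 :=
    div_neg_of_neg_of_pos hx'neg (by nlinarith)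
  -- derivative of Q(c) = exp(-2η(c))
  set Q := Real.exp (-(2 * ηc L c)) with hQdef
  have hQ0 : 0 < Q := Real.exp_pos _
  have hQ1 : Q < 1 := by
    rw [hQdef, Real.exp_lt_one_iff]
    have := eta_pos L c hL hc; linarith
  set Q' : ℝ := Q * (-(2 * (x' / (1 - x ^ 2)))) with hQ'def
  have hQ'pos : 0 < Q' := by
    rw [hQ'def]
    exact mul_pos hQ0 (by linarith)
  have hQd : HasDerivAt (fun c' => Real.exp (-(2 * ηc L c'))) Q' c := by
    exact ((hη.const_mul (2:ℝ)).neg).exp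
  -- derivative of Fclosed
  have hA : HasDerivAt (fun c' => 2 * Real.pi * c' / L) (2 * Real.pi / L) c := by
    have := ((hasDerivAt_id c).const_mul (2 * Real.pi)).div_const L
    simpa using this
  have hdenne : ((1 : ℝ) - Q) ^ 2 ≠ 0 := pow_ne_zero _ (by linarith)
  set D : ℝ := (2 * (2 * Real.pi * c / L) * (2 * Real.pi / L) * (1 + 2 * Q - Q ^ 2) * (1 - Q) ^ 2
      + 4 * (2 * Real.pi * c / L) ^ 2 * Q' * (1 - Q)) / ((1 - Q) ^ 2) ^ 2 with hDdef
  have hFD : HasDerivAt (Fclosed L) D c := by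
    have hnum := (hA.pow 2).mul
      (((hasDerivAt_const c (1:ℝ)).add (hQd.const_mul 2)).sub (hQd.pow 2))
    have hF := hnum.div (((hasDerivAt_const c (1:ℝ)).sub hQd).pow 2) (by show ((1:ℝ) - Real.exp (-(2 * ηc L c))) ^ 2 ≠ 0; rw [← hQdef]; exact hdenne)
    have hF' : HasDerivAt (Fclosed L) _ c := hF
    convert hF' using 1
    simp only [Pi.add_apply, Pi.sub_apply, Pi.mul_apply, Pi.pow_apply]
    have hLne : L ≠ 0 := ne_of_gt hL0
    have hQne : (1 : ℝ) - Q ≠ 0 := by linarith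
    rw [← hQdef, hDdef]
    field_simp
    ring_nf
    simp only [mul_inv_cancel_right₀ hLne]
    ring
  have hdiff : DifferentiableAt ℝ (Fpair L) c :=
    (heqF.differentiableAt_iff).mpr hFD.differentiableAt
  have hderiv : deriv (Fpair L) c = D := heqF.deriv_eq.trans hFD.deriv
  have hApos : 0 < 2 * Real.pi * c / L := by positivity
  have hDpos : 0 < D := by
    rw [hDdef]
    apply div_pos _ (by positivity)
    have h1 : 0 < 1 + 2 * Q - Q ^ 2 := by nlinarith
    have hT1 : 0 < 2 * (2 * Real.pi * c / L) * (2 * Real.pi / L) * (1 + 2 * Q - Q ^ 2) * (1 - Q) ^ 2 := by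
      apply mul_pos (mul_pos (mul_pos (by positivity) (by positivity)) h1) (by positivity)
    have hT2 : 0 < 4 * (2 * Real.pi * c / L) ^ 2 * Q' * (1 - Q) := by
      apply mul_pos (mul_pos (by positivity) hQ'pos) (by linarith)
    linarith
  refine ⟨hdiff, ?_⟩
  rw [hderiv]
  have := mul_pos hL0 hDpos
  linarith
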